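/- Let (X,r) be a finite biquandle of Dehornoy class d, and let k be a positive integer coprime to d. If (X,r) is indecomposable (respectively simple), then the k-cabled solution (X, r^{(k)}) is indecomposable (respectively simple). -/

import Mathlib

open Function

section Defs

variable {X Y : Type*}

/-- `r₁₂ = r × id` on `X³`. -/
def r12 (r : X × X → X × X) : X × X × X → X × X × X :=
  fun p => ((r (p.1, p.2.1)).1, (r (p.1, p.2.1)).2, p.2.2)

/-- `r₂₃ = id × r` on `X³`. -/
def r23 (r : X × X → X × X) : X × X × X → X × X × X :=
  fun p => (p.1, r p.2)

/-- The Yang--Baxter (braid) equation. -/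
def IsYB (r : X × X → X × X) : Prop :=
  (r12 r) ∘ (r23 r) ∘ (r12 r) = (r23 r) ∘ (r12 r) ∘ (r23 r)

/-- The solution map `r(x,y) = (λ_x(y), ρ_y(x))` built from `λ` and `ρ`. -/
def rMap (lam : X → Equiv.Perm X) (rho : X → X → X) : X × X → X × X :=
  fun p => (lam p.1 p.2, rho p.2 p.1)

/-- `(X, r)` with `r(x,y) = (λ_x(y), ρ_y(x))` is a bijective non-degenerate
set-theoretic solution of the Yang--Baxter equation. -/
def IsSolution (lam : X → Equiv.Perm X) (rho : X → X → X) : Prop :=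
  IsYB (rMap lam rho) ∧ Bijective (rMap lam rho) ∧ ∀ y, Bijective (rho y)

/-- The (left) derived operation `σ_y(x) = x ◁ y = λ_y(ρ_{λ_x⁻¹(y)}(x))`. -/
def sigMap (lam : X → Equiv.Perm X) (rho : X → X → X) (y : X) : X → X :=
  fun x => lam y (rho ((lam x).symm y) x)

/-- A biquandle: a solution whose derived rack is a quandle. -/
def IsBiquandle (lam : X → Equiv.Perm X) (rho : X → X → X) : Prop :=
  IsSolution lam rho ∧ ∀ x, sigMap lam rho x x = x

/-- The diagonal map `q(x) = λ_x⁻¹(x)`. -/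
def qMap (lam : X → Equiv.Perm X) : X → X := fun x => (lam x).symm x

/-- `λ` of the `k`-th additive multiple: `λ_{kx}` restricted to `X`,
computed via `kx = x ∘ q(x) ∘ ⋯ ∘ q^{k-1}(x)` and `λ_{a∘b} = λ_a λ_b`. -/
def lamCab (lam : X → Equiv.Perm X) : ℕ → X → Equiv.Perm X
  | 0, _ => 1
  | k+1, x => lam x * lamCab lam k (qMap lam x)

/-- `σ` of the `k`-th additive multiple: `σ_{ky} = σ_y^k` restricted to `X`. -/
def sigCab (lam : X → Equiv.Perm X) (rho : X → X → X) (k : ℕ) (y : X) : X → X :=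
  (sigMap lam rho y)^[k]

/-- `ρ` of the `k`-cabled solution, via `ρ_b(a) = λ_{λ_a(b)}⁻¹ σ_{λ_a(b)}(a)`. -/
def rhoCab (lam : X → Equiv.Perm X) (rho : X → X → X) (k : ℕ) (y x : X) : X :=
  (lamCab lam k (lamCab lam k x y)).symm (sigCab lam rho k (lamCab lam k x y) x)

/-- The `k`-cabled solution `r^{(k)}`. -/
def rCab (lam : X → Equiv.Perm X) (rho : X → X → X) (k : ℕ) : X × X → X × X :=
  rMap (lamCab lam k) (rhoCab lam rho k)

/-- `f` is a morphism of solutions `(X,r) → (Y,s)`. -/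
def IsMor (r : X × X → X × X) (s : Y × Y → Y × Y) (f : X → Y) : Prop :=
  ∀ p, Prod.map f f (r p) = s (Prod.map f f p)

/-- `(X,r)` is `n`-decomposable: a partition into `n` nonempty subsolutions
`X_1, …, X_n` with `r(X_i × X_j) = X_j × X_i`. -/
def NDecomp (r : X × X → X × X) (n : ℕ) : Prop :=
  ∃ P : Fin n → Set X, (∀ i, (P i).Nonempty) ∧
    (∀ i j, i ≠ j → Disjoint (P i) (P j)) ∧ (⋃ i, P i) = Set.univ ∧
    ∀ i j, r '' ((P i) ×ˢ (P j)) = (P j) ×ˢ (P i)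

/-- `(X,r)` is decomposable: a partition `X = Y ⊔ Z` into nonempty parts with
`r(Y×Y) ⊆ Y×Y` and `r(Z×Z) ⊆ Z×Z`. -/
def Decomposable (r : X × X → X × X) : Prop :=
  ∃ A B : Set X, A.Nonempty ∧ B.Nonempty ∧ Disjoint A B ∧ A ∪ B = Set.univ ∧
    r '' (A ×ˢ A) ⊆ A ×ˢ A ∧ r '' (B ×ˢ B) ⊆ B ×ˢ B

/-- A solution is simple if every epimorphic image is isomorphic to it or a singleton. -/
def SimpleSol {X : Type u} (r : X × X → X × X) : Prop :=
  ∀ (Z : Type u) (s : Z × Z → Z × Z) (f : X → Z),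
    Surjective f → IsMor r s f → Bijective f ∨ Subsingleton Z

/-- The image in `Perm X` of the group `S(X,r) = ⟨σ_x⁻¹ : x ∈ X⟩ ⋊ 𝒢(X,r)`
acting on `X` via `(σ_a⁻¹, λ_b, ρ_b⁻¹) · x = σ_a⁻¹ λ_b (x)`:
the subgroup of `Perm X` generated by all `σ_x` and `λ_x`. -/
def permGroupOf (lam : X → Equiv.Perm X) (rho : X → X → X) : Subgroup (Equiv.Perm X) :=
  Subgroup.closure {g : Equiv.Perm X | (∃ y, ⇑g = sigMap lam rho y) ∨ ∃ y, g = lam y}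

/-- Relations `x ∘ y = l(x,y) ∘ ρ(y,x)` defining a structure group. -/
def relsOf (l ρ : X → X → X) : Set (FreeGroup X) :=
  {w | ∃ x y : X, w = FreeGroup.of x * FreeGroup.of y *
      (FreeGroup.of (l x y) * FreeGroup.of (ρ y x))⁻¹}

end Defs
section Aux

variable {X Z : Type*}

lemma lamCab_succ (lam : X → Equiv.Perm X) (k : ℕ) (x : X) :
    lamCab lam (k + 1) x = lam x * lamCab lam k (qMap lam x) := rfl

lemma lamCab_add (lam : X → Equiv.Perm X) (a b : ℕ) (x : X) :
    lamCab lam (a + b) x = lamCab lam a x * lamCab lam b ((qMap lam)^[a] x) := by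
  induction a generalizing x with
  | zero => simp [lamCab]
  | succ n ih =>
      rw [show n + 1 + b = (n + b) + 1 by omega, lamCab_succ, ih, lamCab_succ, mul_assoc,
        Function.iterate_succ_apply]

lemma qMap_lamCab (lam : X → Equiv.Perm X) (k : ℕ) (x : X) :
    qMap (lamCab lam k) x = (qMap lam)^[k] x := by
  induction k generalizing x with
  | zero => simp [qMap, lamCab]; rfl
  | succ n ih =>
      rw [Function.iterate_succ_apply, ← ih (qMap lam x)]
      show ((lam x) * (lamCab lam n (qMap lam x))).symm x = _
      have : ∀ (a b : Equiv.Perm X) (y : X), (a * b).symm y = b.symm (a.symm y) := fun _ _ _ => rfl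
      rw [this]
      rfl

lemma lamCab_comp (lam : X → Equiv.Perm X) (k l : ℕ) (x : X) :
    lamCab (lamCab lam k) l x = lamCab lam (k * l) x := by
  induction l generalizing x with
  | zero => simp [lamCab]
  | succ n ih =>
      rw [lamCab_succ, qMap_lamCab, ih, show k * (n + 1) = k + k * n by ring, lamCab_add]

lemma sigMap_cab (lam : X → Equiv.Perm X) (rho : X → X → X) (k : ℕ) (y x : X) :
    sigMap (lamCab lam k) (rhoCab lam rho k) y x = sigCab lam rho k y x := by
  simp [sigMap, rhoCab]

lemma sigCab_cab (lam : X → Equiv.Perm X) (rho : X → X → X) (k l : ℕ) (y x : X) :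
    sigCab (lamCab lam k) (rhoCab lam rho k) l y x = sigCab lam rho (k * l) y x := by
  have h1 : sigMap (lamCab lam k) (rhoCab lam rho k) y = sigCab lam rho k y :=
    funext (sigMap_cab lam rho k y)
  show (sigMap (lamCab lam k) (rhoCab lam rho k) y)^[l] x = (sigMap lam rho y)^[k * l] x
  rw [h1, Function.iterate_mul]
  rfl

lemma rhoCab_comp (lam : X → Equiv.Perm X) (rho : X → X → X) (k l : ℕ) (y x : X) :
    rhoCab (lamCab lam k) (rhoCab lam rho k) l y x = rhoCab lam rho (k * l) y x := by
  simp only [rhoCab, lamCab_comp, sigCab_cab]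

lemma rCab_comp (lam : X → Equiv.Perm X) (rho : X → X → X) (k l : ℕ) :
    rCab (lamCab lam k) (rhoCab lam rho k) l = rCab lam rho (k * l) := by
  funext p
  simp [rCab, rMap, lamCab_comp, rhoCab_comp]

lemma rCab_one (lam : X → Equiv.Perm X) (rho : X → X → X) :
    rCab lam rho 1 = rMap lam rho := by
  have hl : ∀ x : X, lamCab lam 1 x = lam x := fun x => by simp [lamCab]
  funext p
  simp [rCab, rMap, rhoCab, hl, sigCab, sigMap]

lemma rCab_period (lam : X → Equiv.Perm X) (rho : X → X → X) (d : ℕ)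
    (hper : ∀ x : X, lamCab lam d x = 1 ∧ sigCab lam rho d x = id) (m : ℕ) :
    rCab lam rho (m + d) = rCab lam rho m := by
  have hlam : ∀ x, lamCab lam (m + d) x = lamCab lam m x := fun x => by
    rw [lamCab_add, (hper _).1, mul_one]
  have hsig : ∀ y x, sigCab lam rho (m + d) y x = sigCab lam rho m y x := fun y x => by
    show (sigMap lam rho y)^[m + d] x = (sigMap lam rho y)^[m] x
    rw [Function.iterate_add_apply, show (sigMap lam rho y)^[d] x = x from congrFun ((hper y).2) x]
  funext p
  simp [rCab, rMap, rhoCab, hlam, hsig]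

lemma rCab_period_mul (lam : X → Equiv.Perm X) (rho : X → X → X) (d : ℕ)
    (hper : ∀ x : X, lamCab lam d x = 1 ∧ sigCab lam rho d x = id) (t m : ℕ) :
    rCab lam rho (m + t * d) = rCab lam rho m := by
  induction t with
  | zero => simp
  | succ n ih => rw [show m + (n + 1) * d = (m + n * d) + d by ring,
      rCab_period lam rho d hper, ih]

lemma symm_mem [Finite X] (e : Equiv.Perm X) (A : Set X)
    (h : ∀ a ∈ A, e a ∈ A) {x : X} (hx : x ∈ A) : e.symm x ∈ A := by
  have himg : e '' A = A :=
    Set.eq_of_subset_of_ncard_le (by rintro _ ⟨a, ha, rfl⟩; exact h a ha)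
      (by rw [Set.ncard_image_of_injective _ e.injective]) (Set.toFinite A)
  rw [← himg] at hx
  obtain ⟨a, ha, rfl⟩ := hx
  simpa using ha

lemma inv_cab [Finite X] (L : X → Equiv.Perm X) (R : X → X → X) (A : Set X)
    (hL : ∀ a ∈ A, ∀ b ∈ A, L a b ∈ A) (hR : ∀ a ∈ A, ∀ b ∈ A, R b a ∈ A) (n : ℕ) :
    (∀ a ∈ A, ∀ b ∈ A, lamCab L n a b ∈ A) ∧ (∀ a ∈ A, ∀ b ∈ A, rhoCab L R n b a ∈ A) := by
  have hlam : ∀ n, ∀ a ∈ A, ∀ b ∈ A, lamCab L n a b ∈ A := by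
    intro n
    induction n with
    | zero => intro a _ b hb; simpa [lamCab] using hb
    | succ m ih =>
        intro a ha b hb
        have hq : qMap L a ∈ A := symm_mem (L a) A (fun c hc => hL a ha c hc) ha
        exact hL a ha _ (ih _ hq b hb)
  have hsig : ∀ y ∈ A, ∀ x ∈ A, sigMap L R y x ∈ A := by
    intro y hy x hx
    have h1 : (L x).symm y ∈ A := symm_mem (L x) A (fun c hc => hL x hx c hc) hy
    exact hL y hy _ (hR x hx _ h1)
  have hsigc : ∀ n, ∀ y ∈ A, ∀ x ∈ A, sigCab L R n y x ∈ A := by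
    intro n y hy
    induction n with
    | zero => intro x hx; simpa [sigCab] using hx
    | succ m ih =>
        intro x hx
        show (sigMap L R y)^[m + 1] x ∈ A
        rw [Function.iterate_succ_apply]
        exact ih _ (hsig y hy x hx)
  refine ⟨hlam n, ?_⟩
  intro a ha b hb
  show (lamCab L n (lamCab L n a b)).symm (sigCab L R n (lamCab L n a b) a) ∈ A
  have hc : lamCab L n a b ∈ A := hlam n a ha b hb
  exact symm_mem _ A (fun c hcA => hlam n _ hc c hcA) (hsigc n _ hc a ha)

lemma decomp_cab [Finite X] (L : X → Equiv.Perm X) (R : X → X → X) (n : ℕ) :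
    Decomposable (rMap L R) → Decomposable (rCab L R n) := by
  rintro ⟨A, B, hA, hB, hdis, hun, hAA, hBB⟩
  have key : ∀ S : Set X, rMap L R '' (S ×ˢ S) ⊆ S ×ˢ S → rCab L R n '' (S ×ˢ S) ⊆ S ×ˢ S := by
    intro S hS
    have hL : ∀ a ∈ S, ∀ b ∈ S, L a b ∈ S := fun a ha b hb =>
      (hS ⟨(a, b), ⟨ha, hb⟩, rfl⟩).1
    have hR : ∀ a ∈ S, ∀ b ∈ S, R b a ∈ S := fun a ha b hb =>
      (hS ⟨(a, b), ⟨ha, hb⟩, rfl⟩).2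
    obtain ⟨h1, h2⟩ := inv_cab L R S hL hR n
    rintro ⟨u, v⟩ ⟨⟨a, b⟩, ⟨ha, hb⟩, heq⟩
    have : rCab L R n (a, b) = (lamCab L n a b, rhoCab L R n b a) := rfl
    rw [this] at heq
    rw [← heq]
    exact ⟨h1 a ha b hb, h2 a ha b hb⟩
  exact ⟨A, B, hA, hB, hdis, hun, key A hAA, key B hBB⟩

lemma mor_cab (L : X → Equiv.Perm X) (R : X → X → X)
    (L' : Z → Equiv.Perm Z) (R' : Z → Z → Z) (f : X → Z)
    (hL : ∀ a b, f (L a b) = L' (f a) (f b)) (hR : ∀ a b, f (R b a) = R' (f b) (f a)) (n : ℕ) :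
    IsMor (rCab L R n) (rCab L' R' n) f := by
  have hsymm : ∀ a x, f ((L a).symm x) = (L' (f a)).symm (f x) := by
    intro a x
    apply (L' (f a)).injective
    rw [Equiv.apply_symm_apply, ← hL, Equiv.apply_symm_apply]
  have hq : ∀ a, f (qMap L a) = qMap L' (f a) := fun a => hsymm a a
  have hlam : ∀ m a b, f (lamCab L m a b) = lamCab L' m (f a) (f b) := by
    intro m
    induction m with
    | zero => intro a b; simp [lamCab]
    | succ i ih =>
        intro a b
        show f (L a (lamCab L i (qMap L a) b)) = L' (f a) (lamCab L' i (qMap L' (f a)) (f b))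
        rw [hL, ih, hq]
  have hlsymm : ∀ m a x, f ((lamCab L m a).symm x) = (lamCab L' m (f a)).symm (f x) := by
    intro m a x
    apply (lamCab L' m (f a)).injective
    rw [Equiv.apply_symm_apply, ← hlam, Equiv.apply_symm_apply]
  have hsig : ∀ y x, f (sigMap L R y x) = sigMap L' R' (f y) (f x) := by
    intro y x
    show f (L y (R ((L x).symm y) x)) = L' (f y) (R' ((L' (f x)).symm (f y)) (f x))
    rw [hL, hR, hsymm]
  have hsigc : ∀ m y x, f (sigCab L R m y x) = sigCab L' R' m (f y) (f x) := by
    intro m y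
    induction m with
    | zero => intro x; rfl
    | succ i ih =>
        intro x
        show f ((sigMap L R y)^[i + 1] x) = (sigMap L' R' (f y))^[i + 1] (f x)
        rw [Function.iterate_succ_apply, Function.iterate_succ_apply]
        rw [show (sigMap L R y)^[i] (sigMap L R y x) = sigCab L R i y (sigMap L R y x) from rfl,
          ih, hsig]
        rfl
  have hrho : ∀ m y x, f (rhoCab L R m y x) = rhoCab L' R' m (f y) (f x) := by
    intro m y x
    show f ((lamCab L m (lamCab L m x y)).symm (sigCab L R m (lamCab L m x y) x)) = _
    rw [hlsymm, hsigc, hlam]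
    rfl
  rintro ⟨a, b⟩
  show (f (lamCab L n a b), f (rhoCab L R n b a)) = (lamCab L' n (f a) (f b), rhoCab L' R' n (f b) (f a))
  rw [hlam, hrho]

end Aux

/-- if `(X,r)` is a finite biquandle of Dehornoy class `d` and `k` is a
positive integer coprime to `d`, then indecomposability and simplicity are preserved
under `k`-cabling. -/
theorem cabling_preserves_simple_indecomposable {X : Type u} [Finite X] [Nonempty X]
    (lam : X → Equiv.Perm X) (rho : X → X → X)
    (hbq : IsBiquandle lam rho) (d k : ℕ)
    (hd : IsLeast {e : ℕ | 0 < e ∧ ∀ x : X, lamCab lam e x = 1 ∧ sigCab lam rho e x = id} d)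
    (hk : 0 < k) (hcop : Nat.Coprime k d) :
    (¬ Decomposable (rMap lam rho) → ¬ Decomposable (rCab lam rho k)) ∧
    (SimpleSol.{u} (rMap lam rho) → SimpleSol.{u} (rCab lam rho k)) := by
  obtain ⟨⟨hdpos, hper⟩, -⟩ := hd
  set l := k ^ (d.totient - 1) with hl
  have hdt : 0 < d.totient := Nat.totient_pos.mpr hdpos
  have hkl : k * l = k ^ d.totient := by
    rw [hl, ← pow_succ']
    congr 1
    omega
  have hm1 : 1 ≤ k ^ d.totient := Nat.one_le_pow _ _ hk
  have hmod : k ^ d.totient ≡ 1 [MOD d] := Nat.ModEq.pow_totient hcop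
  obtain ⟨t, ht⟩ := (Nat.modEq_iff_dvd' hm1).mp hmod.symm
  have hmt : k * l = 1 + t * d := by
    rw [hkl, (Nat.sub_eq_iff_eq_add hm1).mp ht, mul_comm d t, add_comm]
  have hmaster : rCab lam rho (k * l) = rMap lam rho := by
    rw [hmt, rCab_period_mul lam rho d hper t 1, rCab_one]
  constructor
  · intro hnd hdc
    apply hnd
    have h2 := decomp_cab (lamCab lam k) (rhoCab lam rho k) l hdc
    rw [rCab_comp, hmaster] at h2
    exact h2
  · intro hs Z s f hf hmor
    have : Finite Z := Finite.of_surjective f hf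
    have hcomp : ∀ a b : X, f (lamCab lam k a b) = (s (f a, f b)).1 ∧
        f (rhoCab lam rho k b a) = (s (f a, f b)).2 := by
      intro a b
      have h := hmor (a, b)
      simp only [rCab, rMap, Prod.map] at h
      exact ⟨congrArg Prod.fst h, congrArg Prod.snd h⟩
    have hbij : ∀ z : Z, Function.Bijective (fun w => (s (z, w)).1) := by
      intro z
      obtain ⟨a, rfl⟩ := hf z
      have hsurj : Function.Surjective (fun w => (s (f a, w)).1) := by
        intro w
        obtain ⟨c, rfl⟩ := hf w
        refine ⟨f ((lamCab lam k a).symm c), ?_⟩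
        show (s (f a, f ((lamCab lam k a).symm c))).1 = f c
        rw [← (hcomp a _).1, Equiv.apply_symm_apply]
      exact Finite.surjective_iff_bijective.mp hsurj
    set lamZ : Z → Equiv.Perm Z := fun z => Equiv.ofBijective _ (hbij z) with hlamZ
    set rhoZ : Z → Z → Z := fun w z => (s (z, w)).2 with hrhoZ
    have hLf : ∀ a b, f (lamCab lam k a b) = lamZ (f a) (f b) := fun a b => (hcomp a b).1
    have hRf : ∀ a b, f (rhoCab lam rho k b a) = rhoZ (f b) (f a) := fun a b => (hcomp a b).2
    have hmor2 : IsMor (rCab (lamCab lam k) (rhoCab lam rho k) l) (rCab lamZ rhoZ l) f :=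
      mor_cab _ _ _ _ f hLf hRf l
    rw [rCab_comp, hmaster] at hmor2
    exact hs Z (rCab lamZ rhoZ l) f hf hmor2
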